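/- Let e = E₁₂, f = E₂₁, n₁ = E₁₃, n₂ = E₂₃, h = E₁₁ − E₂₂ in the Lie algebra of 3×3 complex matrices with bracket [A,B] = AB − BA, and for a, b ∈ ℂ let M(a,b) = (b² − a)·e − f − b·n₁. Define g^1 to be the Lie subalgebra generated by all differences M(a,b) − M(a',b'), and inductively g^{k+1} the Lie subalgebra generated by g^k together with all [x, M(a,b)], x ∈ g^k, a, b ∈ ℂ. Then g^1 = span_ℂ{e, n₁}, g^2 = span_ℂ{e, n₁, n₂, h}, and g^3 = span_ℂ{e, n₁, n₂, h, f}, which is the full 5-dimensional subalgebra g in which M takes its values. -/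

import Mathlib

open Matrix

attribute [local instance] LieRing.ofAssociativeRing

private lemma mulE3 (i j k l : Fin 3) (c d : ℂ) :
    Matrix.single i j c * Matrix.single k l d =
      if j = k then Matrix.single i l (c * d) else 0 := by
  by_cases hjk : j = k
  · subst hjk; simp
  · simp [Matrix.single_mul_single_of_ne (h := hjk), hjk]

private lemma spanClosed {L : Type*} [LieRing L] [LieAlgebra ℂ L] {s : Set L}
    (hs : ∀ x ∈ s, ∀ y ∈ s, ⁅x, y⁆ ∈ Submodule.span ℂ s) :
    ∀ x ∈ Submodule.span ℂ s, ∀ y ∈ Submodule.span ℂ s,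
      ⁅x, y⁆ ∈ Submodule.span ℂ s := by
  intro x hx y hy
  induction hy using Submodule.span_induction with
  | mem z hz =>
      induction hx using Submodule.span_induction with
      | mem w hw => exact hs w hw z hz
      | zero => rw [zero_lie]; exact Submodule.zero_mem _
      | add a b _ _ ha hb => rw [add_lie]; exact Submodule.add_mem _ ha hb
      | smul c a _ ha => rw [smul_lie]; exact Submodule.smul_mem _ c ha
  | zero => rw [lie_zero]; exact Submodule.zero_mem _
  | add a b _ _ ha hb => rw [lie_add]; exact Submodule.add_mem _ ha hb
  | smul c a _ ha => rw [lie_smul]; exact Submodule.smul_mem _ c ha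

private lemma lieSpanEq {L : Type*} [LieRing L] [LieAlgebra ℂ L]
    (T s : Set L)
    (hclosed : ∀ x ∈ s, ∀ y ∈ s, ⁅x, y⁆ ∈ Submodule.span ℂ s)
    (hTs : ∀ x ∈ T, x ∈ Submodule.span ℂ s)
    (hsT : ∀ x ∈ s, x ∈ LieSubalgebra.lieSpan ℂ L T) :
    (LieSubalgebra.lieSpan ℂ L T).toSubmodule = Submodule.span ℂ s := by
  apply le_antisymm
  · let K : LieSubalgebra ℂ L :=
      { Submodule.span ℂ s with
        lie_mem' := fun {x y} hx hy => spanClosed hclosed x hx y hy }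
    have hK : LieSubalgebra.lieSpan ℂ L T ≤ K :=
      (LieSubalgebra.lieSpan_le).mpr hTs
    intro x hx
    exact hK hx
  · exact Submodule.span_le.mpr hsT

/-- The chain of subalgebras associated with the `x`-part
`M(a,b) = (b² − a)e − f − b·n₁` of the zero-curvature representation of the
Kersten–Krasilshchik system (inside `3×3` complex matrices with the commutator
bracket): `g¹ = span{e, n₁}`, `g² = span{e, n₁, n₂, h}`,
`g³ = span{e, n₁, n₂, h, f}`. -/
theorem stmt11
    (e f n₁ n₂ h : Matrix (Fin 3) (Fin 3) ℂ)
    (he : e = Matrix.single 0 1 1)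
    (hf : f = Matrix.single 1 0 1)
    (hn₁ : n₁ = Matrix.single 0 2 1)
    (hn₂ : n₂ = Matrix.single 1 2 1)
    (hh : h = Matrix.single 0 0 1 - Matrix.single 1 1 1)
    (M : ℂ → ℂ → Matrix (Fin 3) (Fin 3) ℂ)
    (hM : ∀ a b : ℂ, M a b = (b ^ 2 - a) • e - f - b • n₁)
    (g1 g2 g3 : LieSubalgebra ℂ (Matrix (Fin 3) (Fin 3) ℂ))
    (hg1 : g1 = LieSubalgebra.lieSpan ℂ _
      {x | ∃ a b a' b' : ℂ, x = M a b - M a' b'})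
    (hg2 : g2 = LieSubalgebra.lieSpan ℂ _
      ((g1 : Set (Matrix (Fin 3) (Fin 3) ℂ))
        ∪ {x | ∃ y ∈ g1, ∃ a b : ℂ, x = ⁅y, M a b⁆}))
    (hg3 : g3 = LieSubalgebra.lieSpan ℂ _
      ((g2 : Set (Matrix (Fin 3) (Fin 3) ℂ))
        ∪ {x | ∃ y ∈ g2, ∃ a b : ℂ, x = ⁅y, M a b⁆})) :
    g1.toSubmodule = Submodule.span ℂ {e, n₁}
    ∧ g2.toSubmodule = Submodule.span ℂ {e, n₁, n₂, h}
    ∧ g3.toSubmodule = Submodule.span ℂ {e, n₁, n₂, h, f} := by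
  -- bracket relations
  have lef : ⁅e, f⁆ = h := by
    rw [he, hf, hh, Ring.lie_def]
    simp (config := { decide := true }) only [mulE3, reduceIte, mul_one]
    try module
  have len₁ : ⁅e, n₁⁆ = 0 := by
    rw [he, hn₁, Ring.lie_def]
    simp (config := { decide := true }) only [mulE3, reduceIte, mul_one]
    try module
  have len₂ : ⁅e, n₂⁆ = n₁ := by
    rw [he, hn₂, hn₁, Ring.lie_def]
    simp (config := { decide := true }) only [mulE3, reduceIte, mul_one]
    try module
  have leh : ⁅e, h⁆ = -(e + e) := by
    rw [he, hh, Ring.lie_def]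
    simp (config := { decide := true }) only [Matrix.mul_sub, Matrix.sub_mul,
      mulE3, reduceIte, mul_one]
    try module
  have ln₁f : ⁅n₁, f⁆ = -n₂ := by
    rw [hn₁, hf, hn₂, Ring.lie_def]
    simp (config := { decide := true }) only [mulE3, reduceIte, mul_one]
    try module
  have ln₁n₂ : ⁅n₁, n₂⁆ = 0 := by
    rw [hn₁, hn₂, Ring.lie_def]
    simp (config := { decide := true }) only [mulE3, reduceIte, mul_one]
    try module
  have ln₁h : ⁅n₁, h⁆ = -n₁ := by
    rw [hn₁, hh, Ring.lie_def]
    simp (config := { decide := true }) only [Matrix.mul_sub, Matrix.sub_mul,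
      mulE3, reduceIte, mul_one]
    try module
  have ln₂f : ⁅n₂, f⁆ = 0 := by
    rw [hn₂, hf, Ring.lie_def]
    simp (config := { decide := true }) only [mulE3, reduceIte, mul_one]
    try module
  have ln₂h : ⁅n₂, h⁆ = n₂ := by
    rw [hn₂, hh, Ring.lie_def]
    simp (config := { decide := true }) only [Matrix.mul_sub, Matrix.sub_mul,
      mulE3, reduceIte, mul_one]
    try module
  have ln₁e : ⁅n₁, e⁆ = 0 := by rw [← neg_eq_zero, lie_skew, len₁]
  have ln₂e : ⁅n₂, e⁆ = -n₁ := by rw [← lie_skew, len₂]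
  have ln₂n₁ : ⁅n₂, n₁⁆ = 0 := by rw [← neg_eq_zero, lie_skew, ln₁n₂]
  have lhe : ⁅h, e⁆ = e + e := by
    rw [← lie_skew, leh]; module
  have lfh0 : ⁅f, h⁆ = f + f := by
    rw [hf, hh, Ring.lie_def]
    simp (config := { decide := true }) only [Matrix.mul_sub, Matrix.sub_mul,
      mulE3, reduceIte, mul_one]
    try module
  have lhf : ⁅h, f⁆ = -(f + f) := by
    rw [← lie_skew, lfh0]; try module
  have lhn₁ : ⁅h, n₁⁆ = n₁ := by rw [← lie_skew, ln₁h]; module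
  have lhn₂ : ⁅h, n₂⁆ = -n₂ := by rw [← lie_skew, ln₂h]
  have lfe : ⁅f, e⁆ = -h := by rw [← lie_skew, lef]
  have lfn₁ : ⁅f, n₁⁆ = n₂ := by rw [← lie_skew, ln₁f]; module
  have lfn₂ : ⁅f, n₂⁆ = 0 := by rw [← neg_eq_zero, lie_skew, ln₂f]
  have lfh : ⁅f, h⁆ = f + f := lfh0
  -- brackets with M
  have hbrM : ∀ (x : Matrix (Fin 3) (Fin 3) ℂ) (a b : ℂ),
      ⁅x, M a b⁆ = (b ^ 2 - a) • ⁅x, e⁆ - ⁅x, f⁆ - b • ⁅x, n₁⁆ := by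
    intro x a b
    rw [hM, lie_sub, lie_sub, lie_smul, lie_smul]
  have hEM : ∀ a b : ℂ, ⁅e, M a b⁆ = -h := by
    intro a b; rw [hbrM, lie_self, lef, len₁]; module
  have hN₁M : ∀ a b : ℂ, ⁅n₁, M a b⁆ = n₂ := by
    intro a b; rw [hbrM, ln₁e, ln₁f, lie_self]; module
  have hN₂M : ∀ a b : ℂ, ⁅n₂, M a b⁆ = (-(b ^ 2 - a)) • n₁ := by
    intro a b; rw [hbrM, ln₂e, ln₂f, ln₂n₁]; module
  have hHM : ∀ a b : ℂ,
      ⁅h, M a b⁆ = ((2 : ℂ) * (b ^ 2 - a)) • e + (2 : ℂ) • f + (-b) • n₁ := by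
    intro a b; rw [hbrM, lhe, lhf, lhn₁]; module
  -- membership helpers
  have me1 : e ∈ Submodule.span ℂ ({e, n₁} : Set (Matrix (Fin 3) (Fin 3) ℂ)) :=
    Submodule.subset_span (by simp)
  have mn₁1 : n₁ ∈ Submodule.span ℂ ({e, n₁} : Set (Matrix (Fin 3) (Fin 3) ℂ)) :=
    Submodule.subset_span (by simp)
  -- closure of span {e, n₁}
  have hc1 : ∀ x ∈ ({e, n₁} : Set (Matrix (Fin 3) (Fin 3) ℂ)),
      ∀ y ∈ ({e, n₁} : Set (Matrix (Fin 3) (Fin 3) ℂ)),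
      ⁅x, y⁆ ∈ Submodule.span ℂ ({e, n₁} : Set (Matrix (Fin 3) (Fin 3) ℂ)) := by
    intro x hx y hy
    simp only [Set.mem_insert_iff, Set.mem_singleton_iff] at hx hy
    rcases hx with rfl | rfl <;> rcases hy with rfl | rfl <;>
      simp only [lie_self, len₁, ln₁e] <;> exact Submodule.zero_mem _
  have me2 : e ∈ Submodule.span ℂ ({e, n₁, n₂, h} : Set (Matrix (Fin 3) (Fin 3) ℂ)) :=
    Submodule.subset_span (by simp)
  have mn₁2 : n₁ ∈ Submodule.span ℂ ({e, n₁, n₂, h} : Set (Matrix (Fin 3) (Fin 3) ℂ)) :=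
    Submodule.subset_span (by simp)
  have mn₂2 : n₂ ∈ Submodule.span ℂ ({e, n₁, n₂, h} : Set (Matrix (Fin 3) (Fin 3) ℂ)) :=
    Submodule.subset_span (by simp)
  have mh2 : h ∈ Submodule.span ℂ ({e, n₁, n₂, h} : Set (Matrix (Fin 3) (Fin 3) ℂ)) :=
    Submodule.subset_span (by simp)
  -- closure of span {e, n₁, n₂, h}
  have hc2 : ∀ x ∈ ({e, n₁, n₂, h} : Set (Matrix (Fin 3) (Fin 3) ℂ)),
      ∀ y ∈ ({e, n₁, n₂, h} : Set (Matrix (Fin 3) (Fin 3) ℂ)),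
      ⁅x, y⁆ ∈ Submodule.span ℂ ({e, n₁, n₂, h} : Set (Matrix (Fin 3) (Fin 3) ℂ)) := by
    intro x hx y hy
    simp only [Set.mem_insert_iff, Set.mem_singleton_iff] at hx hy
    rcases hx with rfl | rfl | rfl | rfl <;> rcases hy with rfl | rfl | rfl | rfl <;>
      simp only [lie_self, len₁, len₂, leh, ln₁e, ln₁n₂, ln₁h, ln₂e, ln₂n₁, ln₂h,
        lhe, lhn₁, lhn₂] <;>
      first
        | exact Submodule.zero_mem _
        | exact me2
        | exact mn₁2
        | exact mn₂2
        | exact mh2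
        | exact Submodule.neg_mem _ me2
        | exact Submodule.neg_mem _ mn₁2
        | exact Submodule.neg_mem _ mn₂2
        | exact Submodule.neg_mem _ mh2
        | exact Submodule.add_mem _ me2 me2
        | exact Submodule.neg_mem _ (Submodule.add_mem _ me2 me2)
  have me3 : e ∈ Submodule.span ℂ
      ({e, n₁, n₂, h, f} : Set (Matrix (Fin 3) (Fin 3) ℂ)) :=
    Submodule.subset_span (by simp)
  have mn₁3 : n₁ ∈ Submodule.span ℂ
      ({e, n₁, n₂, h, f} : Set (Matrix (Fin 3) (Fin 3) ℂ)) :=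
    Submodule.subset_span (by simp)
  have mn₂3 : n₂ ∈ Submodule.span ℂ
      ({e, n₁, n₂, h, f} : Set (Matrix (Fin 3) (Fin 3) ℂ)) :=
    Submodule.subset_span (by simp)
  have mh3 : h ∈ Submodule.span ℂ
      ({e, n₁, n₂, h, f} : Set (Matrix (Fin 3) (Fin 3) ℂ)) :=
    Submodule.subset_span (by simp)
  have mf3 : f ∈ Submodule.span ℂ
      ({e, n₁, n₂, h, f} : Set (Matrix (Fin 3) (Fin 3) ℂ)) :=
    Submodule.subset_span (by simp)
  -- closure of span {e, n₁, n₂, h, f}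
  have hc3 : ∀ x ∈ ({e, n₁, n₂, h, f} : Set (Matrix (Fin 3) (Fin 3) ℂ)),
      ∀ y ∈ ({e, n₁, n₂, h, f} : Set (Matrix (Fin 3) (Fin 3) ℂ)),
      ⁅x, y⁆ ∈ Submodule.span ℂ
        ({e, n₁, n₂, h, f} : Set (Matrix (Fin 3) (Fin 3) ℂ)) := by
    intro x hx y hy
    simp only [Set.mem_insert_iff, Set.mem_singleton_iff] at hx hy
    rcases hx with rfl | rfl | rfl | rfl | rfl <;>
      rcases hy with rfl | rfl | rfl | rfl | rfl <;>
      simp only [lie_self, len₁, len₂, leh, lef, ln₁e, ln₁n₂, ln₁h, ln₁f,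
        ln₂e, ln₂n₁, ln₂h, ln₂f, lhe, lhn₁, lhn₂, lhf, lfe, lfn₁, lfn₂, lfh] <;>
      first
        | exact Submodule.zero_mem _
        | exact me3
        | exact mn₁3
        | exact mn₂3
        | exact mh3
        | exact mf3
        | exact Submodule.neg_mem _ me3
        | exact Submodule.neg_mem _ mn₁3
        | exact Submodule.neg_mem _ mn₂3
        | exact Submodule.neg_mem _ mh3
        | exact Submodule.neg_mem _ mf3
        | exact Submodule.add_mem _ me3 me3
        | exact Submodule.neg_mem _ (Submodule.add_mem _ me3 me3)
        | exact Submodule.add_mem _ mf3 mf3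
        | exact Submodule.neg_mem _ (Submodule.add_mem _ mf3 mf3)
  -- Step 1 : g1
  have H1 : g1.toSubmodule = Submodule.span ℂ {e, n₁} := by
    rw [hg1]
    apply lieSpanEq _ _ hc1
    · rintro x ⟨a, b, a', b', rfl⟩
      have hx : M a b - M a' b'
          = (b ^ 2 - a - (b' ^ 2 - a')) • e + (b' - b) • n₁ := by
        rw [hM, hM]; module
      rw [hx]
      exact Submodule.add_mem _ (Submodule.smul_mem _ _ me1)
        (Submodule.smul_mem _ _ mn₁1)
    · have heT : e ∈ LieSubalgebra.lieSpan ℂ _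
          {x | ∃ a b a' b' : ℂ, x = M a b - M a' b'} :=
        LieSubalgebra.subset_lieSpan ⟨-1, 0, 0, 0, by rw [hM, hM]; module⟩
      have hdT : (M 0 0 - M 0 1) ∈ LieSubalgebra.lieSpan ℂ _
          {x | ∃ a b a' b' : ℂ, x = M a b - M a' b'} :=
        LieSubalgebra.subset_lieSpan ⟨0, 0, 0, 1, rfl⟩
      have hn₁T : n₁ ∈ LieSubalgebra.lieSpan ℂ _
          {x | ∃ a b a' b' : ℂ, x = M a b - M a' b'} := by
        have hx : n₁ = (M 0 0 - M 0 1) + e := by rw [hM, hM]; module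
        rw [hx]; exact add_mem hdT heT
      intro x hx
      simp only [Set.mem_insert_iff, Set.mem_singleton_iff] at hx
      rcases hx with rfl | rfl <;> assumption
  -- brackets of g1-elements with M land in span {e, n₁, n₂, h}
  have hbr2 : ∀ y ∈ Submodule.span ℂ ({e, n₁} : Set (Matrix (Fin 3) (Fin 3) ℂ)),
      ∀ a b : ℂ, ⁅y, M a b⁆ ∈
        Submodule.span ℂ ({e, n₁, n₂, h} : Set (Matrix (Fin 3) (Fin 3) ℂ)) := by
    intro y hy a b
    induction hy using Submodule.span_induction with
    | mem z hz =>
        simp only [Set.mem_insert_iff, Set.mem_singleton_iff] at hz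
        rcases hz with rfl | rfl
        · rw [hEM]; exact Submodule.neg_mem _ (Submodule.subset_span (by simp))
        · rw [hN₁M]; exact Submodule.subset_span (by simp)
    | zero => rw [zero_lie]; exact Submodule.zero_mem _
    | add u v _ _ hu hv => rw [add_lie]; exact Submodule.add_mem _ hu hv
    | smul c u _ hu => rw [smul_lie]; exact Submodule.smul_mem _ c hu
  have heg1 : e ∈ g1 := by
    have : e ∈ g1.toSubmodule := by rw [H1]; exact me1
    exact this
  have hn₁g1 : n₁ ∈ g1 := by
    have : n₁ ∈ g1.toSubmodule := by rw [H1]; exact mn₁1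
    exact this
  -- Step 2 : g2
  have H2 : g2.toSubmodule = Submodule.span ℂ {e, n₁, n₂, h} := by
    rw [hg2]
    apply lieSpanEq _ _ hc2
    · rintro x (hx | ⟨y, hy, a, b, rfl⟩)
      · have hx' : x ∈ Submodule.span ℂ ({e, n₁} : Set (Matrix (Fin 3) (Fin 3) ℂ)) := by
          rw [← H1]; exact hx
        refine Submodule.span_mono ?_ hx'
        intro z hz
        simp only [Set.mem_insert_iff, Set.mem_singleton_iff] at hz ⊢
        tauto
      · have hy' : y ∈ Submodule.span ℂ ({e, n₁} : Set (Matrix (Fin 3) (Fin 3) ℂ)) := by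
          rw [← H1]; exact hy
        exact hbr2 y hy' a b
    · have hT2e : e ∈ LieSubalgebra.lieSpan ℂ _
          ((g1 : Set (Matrix (Fin 3) (Fin 3) ℂ))
            ∪ {x | ∃ y ∈ g1, ∃ a b : ℂ, x = ⁅y, M a b⁆}) :=
        LieSubalgebra.subset_lieSpan (Or.inl heg1)
      have hT2n₁ : n₁ ∈ LieSubalgebra.lieSpan ℂ _
          ((g1 : Set (Matrix (Fin 3) (Fin 3) ℂ))
            ∪ {x | ∃ y ∈ g1, ∃ a b : ℂ, x = ⁅y, M a b⁆}) :=
        LieSubalgebra.subset_lieSpan (Or.inl hn₁g1)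
      have hT2n₂ : n₂ ∈ LieSubalgebra.lieSpan ℂ _
          ((g1 : Set (Matrix (Fin 3) (Fin 3) ℂ))
            ∪ {x | ∃ y ∈ g1, ∃ a b : ℂ, x = ⁅y, M a b⁆}) :=
        LieSubalgebra.subset_lieSpan (Or.inr ⟨n₁, hn₁g1, 0, 0, (hN₁M 0 0).symm⟩)
      have hT2h : h ∈ LieSubalgebra.lieSpan ℂ _
          ((g1 : Set (Matrix (Fin 3) (Fin 3) ℂ))
            ∪ {x | ∃ y ∈ g1, ∃ a b : ℂ, x = ⁅y, M a b⁆}) := by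
        have hmh : -h ∈ LieSubalgebra.lieSpan ℂ _
            ((g1 : Set (Matrix (Fin 3) (Fin 3) ℂ))
              ∪ {x | ∃ y ∈ g1, ∃ a b : ℂ, x = ⁅y, M a b⁆}) :=
          LieSubalgebra.subset_lieSpan (Or.inr ⟨e, heg1, 0, 0, (hEM 0 0).symm⟩)
        have := neg_mem hmh
        simpa using this
      intro x hx
      simp only [Set.mem_insert_iff, Set.mem_singleton_iff] at hx
      rcases hx with rfl | rfl | rfl | rfl <;> assumption
  -- brackets of g2-elements with M land in span {e, n₁, n₂, h, f}
  have hbr3 : ∀ y ∈ Submodule.span ℂ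
        ({e, n₁, n₂, h} : Set (Matrix (Fin 3) (Fin 3) ℂ)),
      ∀ a b : ℂ, ⁅y, M a b⁆ ∈
        Submodule.span ℂ ({e, n₁, n₂, h, f} : Set (Matrix (Fin 3) (Fin 3) ℂ)) := by
    intro y hy a b
    induction hy using Submodule.span_induction with
    | mem z hz =>
        simp only [Set.mem_insert_iff, Set.mem_singleton_iff] at hz
        rcases hz with rfl | rfl | rfl | rfl
        · rw [hEM]; exact Submodule.neg_mem _ (Submodule.subset_span (by simp))
        · rw [hN₁M]; exact Submodule.subset_span (by simp)
        · rw [hN₂M]; exact Submodule.smul_mem _ _ (Submodule.subset_span (by simp))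
        · rw [hHM]
          exact Submodule.add_mem _
            (Submodule.add_mem _
              (Submodule.smul_mem _ _ (Submodule.subset_span (by simp)))
              (Submodule.smul_mem _ _ (Submodule.subset_span (by simp))))
            (Submodule.smul_mem _ _ (Submodule.subset_span (by simp)))
    | zero => rw [zero_lie]; exact Submodule.zero_mem _
    | add u v _ _ hu hv => rw [add_lie]; exact Submodule.add_mem _ hu hv
    | smul c u _ hu => rw [smul_lie]; exact Submodule.smul_mem _ c hu
  have hmem2 : ∀ x ∈ Submodule.span ℂ
      ({e, n₁, n₂, h} : Set (Matrix (Fin 3) (Fin 3) ℂ)), x ∈ g2 := by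
    intro x hx
    have : x ∈ g2.toSubmodule := by rw [H2]; exact hx
    exact this
  have heg2 : e ∈ g2 := hmem2 e (Submodule.subset_span (by simp))
  have hn₁g2 : n₁ ∈ g2 := hmem2 n₁ (Submodule.subset_span (by simp))
  have hn₂g2 : n₂ ∈ g2 := hmem2 n₂ (Submodule.subset_span (by simp))
  have hhg2 : h ∈ g2 := hmem2 h (Submodule.subset_span (by simp))
  -- Step 3 : g3
  have H3 : g3.toSubmodule = Submodule.span ℂ {e, n₁, n₂, h, f} := by
    rw [hg3]
    apply lieSpanEq _ _ hc3
    · rintro x (hx | ⟨y, hy, a, b, rfl⟩)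
      · have hx' : x ∈ Submodule.span ℂ
            ({e, n₁, n₂, h} : Set (Matrix (Fin 3) (Fin 3) ℂ)) := by
          rw [← H2]; exact hx
        refine Submodule.span_mono ?_ hx'
        intro z hz
        simp only [Set.mem_insert_iff, Set.mem_singleton_iff] at hz ⊢
        tauto
      · have hy' : y ∈ Submodule.span ℂ
            ({e, n₁, n₂, h} : Set (Matrix (Fin 3) (Fin 3) ℂ)) := by
          rw [← H2]; exact hy
        exact hbr3 y hy' a b
    · have hT3f : f ∈ LieSubalgebra.lieSpan ℂ _
          ((g2 : Set (Matrix (Fin 3) (Fin 3) ℂ))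
            ∪ {x | ∃ y ∈ g2, ∃ a b : ℂ, x = ⁅y, M a b⁆}) := by
        have h2f : ((2 : ℂ) * ((0 : ℂ) ^ 2 - 0)) • e + (2 : ℂ) • f
              + (-(0 : ℂ)) • n₁ ∈ LieSubalgebra.lieSpan ℂ _
            ((g2 : Set (Matrix (Fin 3) (Fin 3) ℂ))
              ∪ {x | ∃ y ∈ g2, ∃ a b : ℂ, x = ⁅y, M a b⁆}) :=
          LieSubalgebra.subset_lieSpan (Or.inr ⟨h, hhg2, 0, 0, (hHM 0 0).symm⟩)
        have hsimp : ((2 : ℂ) * ((0 : ℂ) ^ 2 - 0)) • e + (2 : ℂ) • f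
            + (-(0 : ℂ)) • n₁ = (2 : ℂ) • f := by module
        rw [hsimp] at h2f
        have hfe : f = (2 : ℂ)⁻¹ • ((2 : ℂ) • f) := by
          rw [smul_smul]; norm_num
        rw [hfe]
        exact LieSubalgebra.smul_mem _ _ h2f
      have hT3e : e ∈ LieSubalgebra.lieSpan ℂ _
          ((g2 : Set (Matrix (Fin 3) (Fin 3) ℂ))
            ∪ {x | ∃ y ∈ g2, ∃ a b : ℂ, x = ⁅y, M a b⁆}) :=
        LieSubalgebra.subset_lieSpan (Or.inl heg2)
      have hT3n₁ : n₁ ∈ LieSubalgebra.lieSpan ℂ _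
          ((g2 : Set (Matrix (Fin 3) (Fin 3) ℂ))
            ∪ {x | ∃ y ∈ g2, ∃ a b : ℂ, x = ⁅y, M a b⁆}) :=
        LieSubalgebra.subset_lieSpan (Or.inl hn₁g2)
      have hT3n₂ : n₂ ∈ LieSubalgebra.lieSpan ℂ _
          ((g2 : Set (Matrix (Fin 3) (Fin 3) ℂ))
            ∪ {x | ∃ y ∈ g2, ∃ a b : ℂ, x = ⁅y, M a b⁆}) :=
        LieSubalgebra.subset_lieSpan (Or.inl hn₂g2)
      have hT3h : h ∈ LieSubalgebra.lieSpan ℂ _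
          ((g2 : Set (Matrix (Fin 3) (Fin 3) ℂ))
            ∪ {x | ∃ y ∈ g2, ∃ a b : ℂ, x = ⁅y, M a b⁆}) :=
        LieSubalgebra.subset_lieSpan (Or.inl hhg2)
      intro x hx
      simp only [Set.mem_insert_iff, Set.mem_singleton_iff] at hx
      rcases hx with rfl | rfl | rfl | rfl | rfl <;> assumption
  exact ⟨H1, H2, H3⟩
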